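/- Let $c > 1$ with $c < 2$, let $\gamma = 1/c$, and let $m$ be a positive integer. Then $\lfloor -m^{\gamma} \rfloor - \lfloor -(m+1)^{\gamma} \rfloor = 1$ if there exists a positive integer $n$ with $m = \lfloor n^c \rfloor$, and $\lfloor -m^{\gamma} \rfloor - \lfloor -(m+1)^{\gamma} \rfloor = 0$ otherwise. -/
import Mathlib

open scoped NNReal


/-- For `1 < c < 2`, `γ = 1/c` and a positive integer `m`, the quantity
`⌊-m^γ⌋ - ⌊-(m+1)^γ⌋` equals `1` if `m = ⌊n^c⌋` for some positive integer `n`,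
and equals `0` otherwise. -/
theorem stmt4 (c γ : ℝ) (hc : 1 < c) (hc2 : c < 2) (hγ : γ = 1 / c)
    (m : ℕ) (hm : 0 < m) :
    ((∃ n : ℕ, 0 < n ∧ (m : ℤ) = ⌊(n : ℝ) ^ c⌋) →
        ⌊-((m : ℝ) ^ γ)⌋ - ⌊-(((m : ℝ) + 1) ^ γ)⌋ = 1) ∧
      ((¬∃ n : ℕ, 0 < n ∧ (m : ℤ) = ⌊(n : ℝ) ^ c⌋) →
        ⌊-((m : ℝ) ^ γ)⌋ - ⌊-(((m : ℝ) + 1) ^ γ)⌋ = 0) := by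
  have hc0 : (0 : ℝ) < c := lt_trans one_pos hc
  have hγ0 : 0 < γ := by rw [hγ]; positivity
  have hγ1 : γ ≤ 1 := by rw [hγ, div_le_one hc0]; linarith
  have hγc : γ * c = 1 := by rw [hγ]; field_simp
  set a : ℝ := (m : ℝ) ^ γ with ha
  set b : ℝ := ((m : ℝ) + 1) ^ γ with hb
  have hm0 : (0 : ℝ) ≤ (m : ℝ) := Nat.cast_nonneg m
  have hm1 : (1 : ℝ) ≤ (m : ℝ) := by exact_mod_cast hm
  have ha0 : 0 ≤ a := Real.rpow_nonneg hm0 γ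
  have hab : a ≤ b := Real.rpow_le_rpow hm0 (by linarith) hγ0.le
  -- subadditivity: b ≤ a + 1
  have hba1 : b ≤ a + 1 := by
    have h := NNReal.rpow_add_le_add_rpow (m : ℝ≥0) 1 hγ0.le hγ1
    have h' : (((m : ℝ≥0) + 1 : ℝ≥0) : ℝ) ^ γ ≤ ((m : ℝ≥0) : ℝ) ^ γ + ((1 : ℝ≥0) : ℝ) ^ γ := by
      rw [← NNReal.coe_rpow, ← NNReal.coe_rpow, ← NNReal.coe_rpow, ← NNReal.coe_add]
      exact_mod_cast h
    simpa [Real.one_rpow] using h'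
  -- round-trip: a ^ c = m, b ^ c = m + 1
  have hac : a ^ c = (m : ℝ) := by
    rw [ha, ← Real.rpow_mul hm0, hγc, Real.rpow_one]
  have hbc : b ^ c = (m : ℝ) + 1 := by
    rw [hb, ← Real.rpow_mul (by linarith), hγc, Real.rpow_one]
  -- rewrite the goal using ceilings
  rw [Int.floor_neg, Int.floor_neg]
  have hceil : ⌈b⌉ ≤ ⌈a⌉ + 1 := by
    calc ⌈b⌉ ≤ ⌈a + 1⌉ := Int.ceil_le_ceil hba1
    _ = ⌈a⌉ + 1 := by rw [Int.ceil_add_one]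
  have hceil0 : ⌈a⌉ ≤ ⌈b⌉ := Int.ceil_le_ceil hab
  -- key equivalence
  have key : (∃ n : ℕ, 0 < n ∧ (m : ℤ) = ⌊(n : ℝ) ^ c⌋) ↔ ((⌈a⌉ : ℝ) < b) := by
    constructor
    · rintro ⟨n, hn, hmn⟩
      have hn0 : (0 : ℝ) ≤ (n : ℝ) := Nat.cast_nonneg n
      have h1 : (m : ℝ) ≤ (n : ℝ) ^ c := by
        have := Int.floor_le ((n : ℝ) ^ c)
        rw [← hmn] at this; exact_mod_cast this
      have h2 : (n : ℝ) ^ c < (m : ℝ) + 1 := by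
        have := Int.lt_floor_add_one ((n : ℝ) ^ c)
        rw [← hmn] at this; exact_mod_cast this
      have han : a ≤ (n : ℝ) := by
        rw [← hac] at h1
        exact (Real.rpow_le_rpow_iff ha0 hn0 hc0).mp h1
      have hbn : (n : ℝ) < b := by
        rw [← hbc] at h2
        have hb0 : 0 ≤ b := Real.rpow_nonneg (by linarith) γ
        exact (Real.rpow_lt_rpow_iff hn0 hb0 hc0).mp h2
      calc (⌈a⌉ : ℝ) ≤ (n : ℝ) := by exact_mod_cast Int.ceil_le.mpr han
      _ < b := hbn
    · intro hlt
      have hca : a ≤ (⌈a⌉ : ℝ) := Int.le_ceil a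
      have hcpos : 0 < ⌈a⌉ := by
        have : (1 : ℝ) ≤ a := by
          rw [ha]; calc (1:ℝ) = 1 ^ γ := (Real.one_rpow γ).symm
          _ ≤ (m : ℝ) ^ γ := Real.rpow_le_rpow zero_le_one hm1 hγ0.le
        exact_mod_cast lt_of_lt_of_le zero_lt_one (Int.le_ceil a |>.trans' this) |>.trans_le le_rfl
      refine ⟨⌈a⌉.toNat, by omega, ?_⟩
      have hnat : ((⌈a⌉.toNat : ℕ) : ℝ) = (⌈a⌉ : ℝ) := by
        exact_mod_cast congrArg (Int.cast : ℤ → ℝ) (Int.toNat_of_nonneg hcpos.le)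
      rw [hnat]
      have h1 : (m : ℝ) ≤ (⌈a⌉ : ℝ) ^ c := by
        rw [← hac]
        exact Real.rpow_le_rpow ha0 hca hc0.le
      have h2 : (⌈a⌉ : ℝ) ^ c < (m : ℝ) + 1 := by
        rw [← hbc]
        exact Real.rpow_lt_rpow (by positivity) hlt hc0
      symm
      rw [Int.floor_eq_iff]
      push_cast
      exact ⟨h1, h2⟩
  constructor
  · intro hex
    have hlt := key.mp hex
    have : (⌈a⌉ : ℤ) < ⌈b⌉ := by
      have : (⌈a⌉ : ℝ) < (⌈b⌉ : ℝ) := lt_of_lt_of_le hlt (Int.le_ceil b)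
      exact_mod_cast this
    omega
  · intro hnex
    have hle : b ≤ (⌈a⌉ : ℝ) := not_lt.mp (fun h => hnex (key.mpr h))
    have : ⌈b⌉ ≤ ⌈a⌉ := by
      have := Int.ceil_le.mpr hle
      simpa using this
    omega
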